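/- arXiv:1702.02319 — 2 statements merged into one kernel-verified Lean document; each statement's English description precedes it below -/
import Mathlib

section
/- Let R be a commutative ℚ-algebra and A an n×n matrix over R. Then in the formal power series ring R[[x]], det(I − x·A)⁻¹ = exp(Σ_{k≥1} (x^k/k)·tr(A^k)). Equivalently, det(I − x·A) = exp(−Σ_{k≥1} (x^k/k)·tr(A^k)). -/
open scoped Classical

/-- Formal exponential of a power series over a commutative `ℚ`-algebra.
For series with zero constant term this agrees with `Σ_{k≥0} f^k / k!`,
since `coeff n (f^k) = 0` for `k > n`. -/
noncomputable def pexp {R : Type*} [CommRing R] [Algebra ℚ R]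
    (f : PowerSeries R) : PowerSeries R :=
  PowerSeries.mk fun n =>
    PowerSeries.coeff (R := R) n (∑ k ∈ Finset.range (n + 1), (k.factorial : ℚ)⁻¹ • f ^ k)

section DerivationLemmas

variable {R' S : Type*} [CommRing R'] [CommRing S] [Algebra R' S] (D : Derivation R' S S)

private lemma derivation_prod {ι : Type*} [DecidableEq ι] (s : Finset ι) (f : ι → S) :
    D (∏ i ∈ s, f i) = ∑ i ∈ s, D (f i) * ∏ j ∈ s.erase i, f j := by
  induction s using Finset.induction with
  | empty => simp
  | @insert a s ha ih =>
    rw [Finset.prod_insert ha, D.leibniz, ih, Finset.sum_insert ha,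
      Finset.erase_insert ha]
    rw [smul_eq_mul, smul_eq_mul, Finset.mul_sum]
    rw [mul_comm (∏ j ∈ s, f j) (D (f a)), add_comm]
    congr 1
    apply Finset.sum_congr rfl
    intro i hi
    rw [Finset.erase_insert_of_ne (fun h => ha (by rw [h]; exact hi)),
      Finset.prod_insert (fun h => ha (Finset.erase_subset _ _ h))]
    ring

/-- Jacobi's formula for a derivation. -/
private lemma derivation_det {m : ℕ} (M : Matrix (Fin m) (Fin m) S) :
    D M.det = Matrix.trace (M.adjugate * M.map D) := by
  have key : D M.det = ∑ i, (M.updateCol i fun k => D (M k i)).det := by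
    rw [Matrix.det_apply', map_sum]
    have : ∀ σ : Equiv.Perm (Fin m),
        D (Equiv.Perm.sign σ * ∏ i, M (σ i) i) =
          ∑ i, Equiv.Perm.sign σ * (D (M (σ i) i) * ∏ j ∈ Finset.univ.erase i, M (σ j) j) := by
      intro σ
      rw [show ((Equiv.Perm.sign σ : ℤ) : S) * ∏ i, M (σ i) i
            = (Equiv.Perm.sign σ : ℤ) • ∏ i, M (σ i) i by simp [zsmul_eq_mul],
        map_zsmul, derivation_prod, Finset.smul_sum]
      simp [zsmul_eq_mul, mul_assoc]
    simp_rw [this]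
    rw [Finset.sum_comm]
    apply Finset.sum_congr rfl
    intro i _
    rw [Matrix.det_apply']
    apply Finset.sum_congr rfl
    intro σ _
    congr 1
    rw [← Finset.mul_prod_erase Finset.univ _ (Finset.mem_univ i)]
    rw [Matrix.updateCol_self]
    congr 1
    apply Finset.prod_congr rfl
    intro j hj
    rw [Matrix.updateCol_ne (Finset.ne_of_mem_erase hj)]
  rw [key, Matrix.trace]
  apply Finset.sum_congr rfl
  intro i _
  rw [← Matrix.cramer_apply, Matrix.cramer_eq_adjugate_mulVec]
  simp [Matrix.mulVec, Matrix.diag, Matrix.mul_apply, Matrix.map_apply, dotProduct]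

end DerivationLemmas

namespace PexpAux

open PowerSeries

variable {R : Type*} [CommRing R] [Algebra ℚ R]

omit [Algebra ℚ R] in
lemma coeff_pow_eq_zero {f : R⟦X⟧} (hf : constantCoeff f = 0) {k m : ℕ} (h : m < k) :
    coeff m (f ^ k) = 0 := by
  have : (X : R⟦X⟧) ^ k ∣ f ^ k := pow_dvd_pow_of_dvd (X_dvd_iff.mpr hf) k
  exact X_pow_dvd_iff.mp this m h

lemma coeff_pexp (f : R⟦X⟧) (hf : constantCoeff f = 0) {n m : ℕ} (h : n ≤ m) :
    coeff n (pexp f) =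
      coeff n (∑ k ∈ Finset.range (m + 1), (k.factorial : ℚ)⁻¹ • f ^ k) := by
  rw [pexp, coeff_mk]
  rw [← Finset.sum_range_add_sum_Ico _ (Nat.succ_le_succ h), map_add, left_eq_add,
    map_sum]
  apply Finset.sum_eq_zero
  intro k hk
  rw [coeff_smul, coeff_pow_eq_zero hf (Finset.mem_Ico.mp hk).1, smul_zero]

lemma constantCoeff_pexp (f : R⟦X⟧) : constantCoeff (pexp f) = 1 := by
  rw [← coeff_zero_eq_constantCoeff_apply, pexp, coeff_mk]
  simp

lemma derivative_pexp (f : R⟦X⟧) (hf : constantCoeff f = 0) :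
    d⁄dX R (pexp f) = d⁄dX R f * pexp f := by
  ext n
  have lhs : coeff n (d⁄dX R (pexp f)) =
      coeff n (d⁄dX R (∑ k ∈ Finset.range (n + 2), (k.factorial : ℚ)⁻¹ • f ^ k)) := by
    rw [coeff_derivative, coeff_derivative, coeff_pexp f hf (le_refl (n + 1))]
  have deriv_sum : d⁄dX R (∑ k ∈ Finset.range (n + 2), (k.factorial : ℚ)⁻¹ • f ^ k)
      = d⁄dX R f * ∑ k ∈ Finset.range (n + 1), (k.factorial : ℚ)⁻¹ • f ^ k := by
    rw [map_sum, Finset.mul_sum, Finset.sum_range_succ']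
    simp only [pow_zero, Nat.factorial_zero, Nat.cast_one, inv_one, one_smul,
      Derivation.map_one_eq_zero, add_zero, Derivation.map_smul_of_tower,
      Derivation.leibniz_pow, Nat.add_sub_cancel]
    apply Finset.sum_congr rfl
    intro k _
    have hq : ((k + 1 : ℕ) : ℚ) * (((k + 1).factorial : ℚ))⁻¹ = ((k.factorial : ℚ))⁻¹ := by
      rw [Nat.factorial_succ, Nat.cast_mul, mul_inv, ← mul_assoc, mul_inv_cancel₀, one_mul]
      exact_mod_cast Nat.succ_ne_zero k
    calc ((k + 1).factorial : ℚ)⁻¹ • ((k + 1) • f ^ k • d⁄dX R f)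
        = ((k + 1).factorial : ℚ)⁻¹ • (((k + 1 : ℕ) : ℚ) • (f ^ k • d⁄dX R f)) := by
          rw [Nat.cast_smul_eq_nsmul]
      _ = (((k + 1 : ℕ) : ℚ) * ((k + 1).factorial : ℚ)⁻¹) • (f ^ k • d⁄dX R f) := by
          rw [← smul_smul, smul_comm]
      _ = (k.factorial : ℚ)⁻¹ • (f ^ k * d⁄dX R f) := by rw [hq, smul_eq_mul]
      _ = d⁄dX R f * (k.factorial : ℚ)⁻¹ • f ^ k := by
          rw [mul_smul_comm, mul_comm]
  rw [lhs, deriv_sum, coeff_mul, coeff_mul]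
  apply Finset.sum_congr rfl
  intro p hp
  congr 1
  exact (coeff_pexp f hf (Finset.HasAntidiagonal.antidiagonal.snd_le hp)).symm

lemma eq_one_of_deriv_zero (g : R⟦X⟧) (h0 : constantCoeff g = 1)
    (hd : d⁄dX R g = 0) : g = 1 := by
  ext m
  cases m with
  | zero => simpa using h0
  | succ m =>
    have h1 : coeff m (d⁄dX R g) = 0 := by rw [hd, map_zero]
    rw [coeff_derivative] at h1
    have hu : IsUnit ((m : R) + 1) := by
      have : ((m : R) + 1) = algebraMap ℚ R ((m : ℚ) + 1) := by simp
      rw [this]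
      exact (isUnit_iff_ne_zero.mpr (by positivity)).map _
    rw [coeff_one, if_neg (Nat.succ_ne_zero m)]
    exact hu.mul_left_eq_zero.mp h1

end PexpAux

namespace MatrixPSAux

open PowerSeries

variable {R : Type*} [CommRing R] {n : ℕ} (A : Matrix (Fin n) (Fin n) R)

/-- The inverse of `1 - X • A`, namely `Σ_k A^k X^k`. -/
noncomputable def Minv : Matrix (Fin n) (Fin n) R⟦X⟧ :=
  Matrix.of fun i j => PowerSeries.mk fun k => (A ^ k) i j

lemma mapC_mul_Minv : A.map (C (R := R)) * Minv A =
    Matrix.of fun i j => PowerSeries.mk fun k => (A ^ (k + 1)) i j := by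
  ext i j t
  rw [Matrix.mul_apply, map_sum]
  simp only [Minv, Matrix.map_apply, Matrix.of_apply, coeff_C_mul, coeff_mk]
  rw [pow_succ', Matrix.mul_apply]

lemma B_mul_Minv :
    (1 - (PowerSeries.X : PowerSeries R) • A.map (PowerSeries.C (R := R))) * Minv A = 1 := by
  rw [sub_mul, Matrix.smul_mul, one_mul, mapC_mul_Minv, sub_eq_iff_eq_add]
  ext i j t
  cases t with
  | zero =>
    simp only [Minv, Matrix.add_apply, Matrix.smul_apply, Matrix.of_apply, map_add,
      smul_eq_mul, coeff_zero_eq_constantCoeff_apply, constantCoeff_mk, pow_zero]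
    rw [map_mul, constantCoeff_X, zero_mul, add_zero]
    simp [Matrix.one_apply, apply_ite (constantCoeff (R := R))]
  | succ t =>
    simp only [Minv, Matrix.add_apply, Matrix.smul_apply, Matrix.of_apply, map_add,
      smul_eq_mul, coeff_mk, coeff_succ_X_mul]
    rw [Matrix.one_apply]
    split_ifs with h
    · simp [h, PowerSeries.coeff_one]
    · simp [PowerSeries.coeff_one]

lemma trace_mapC_mul_Minv :
    Matrix.trace (A.map (C (R := R)) * Minv A) = mk fun k => Matrix.trace (A ^ (k + 1)) := by
  rw [mapC_mul_Minv, Matrix.trace]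
  ext t
  rw [map_sum, coeff_mk, Matrix.trace]
  simp [Matrix.diag]

lemma adjugate_B :
    (1 - (PowerSeries.X : PowerSeries R) • A.map (PowerSeries.C (R := R))).adjugate =
      Matrix.det (1 - (PowerSeries.X : PowerSeries R) • A.map (PowerSeries.C (R := R))) • Minv A := by
  set B := 1 - (PowerSeries.X : PowerSeries R) • A.map (PowerSeries.C (R := R)) with hB
  calc B.adjugate = B.adjugate * (B * Minv A) := by rw [B_mul_Minv, mul_one]
    _ = (B.adjugate * B) * Minv A := by rw [Matrix.mul_assoc]
    _ = (B.det • (1 : Matrix (Fin n) (Fin n) R⟦X⟧)) * Minv A := by rw [Matrix.adjugate_mul]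
    _ = B.det • Minv A := by rw [Matrix.smul_mul, one_mul]

lemma constantCoeff_detB :
    constantCoeff (Matrix.det
      (1 - (PowerSeries.X : PowerSeries R) • A.map (PowerSeries.C (R := R)))) = 1 := by
  rw [RingHom.map_det]
  have : (constantCoeff (R := R)).mapMatrix
      (1 - (PowerSeries.X : PowerSeries R) • A.map (PowerSeries.C (R := R))) = 1 := by
    ext i j
    simp only [RingHom.mapMatrix_apply, Matrix.map_apply, Matrix.sub_apply,
      Matrix.smul_apply, smul_eq_mul, map_sub, map_mul, constantCoeff_X, zero_mul, sub_zero]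
    rw [Matrix.one_apply, Matrix.one_apply, apply_ite (constantCoeff (R := R)), map_one, map_zero]
  rw [this, Matrix.det_one]

lemma map_deriv_B :
    (1 - (PowerSeries.X : PowerSeries R) • A.map (PowerSeries.C (R := R))).map (⇑(d⁄dX R)) =
      -(A.map (C (R := R))) := by
  ext i j
  simp only [Matrix.map_apply, Matrix.sub_apply, Matrix.smul_apply, smul_eq_mul,
    Matrix.neg_apply, map_sub]
  have hX : d⁄dX R ((X : R⟦X⟧) * C (R := R) (A i j)) = C (R := R) (A i j) := by
    rw [Derivation.leibniz]; simp
  rw [hX, Matrix.one_apply]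
  split_ifs with h
  · rw [Derivation.map_one_eq_zero]; simp
  · rw [map_zero]; simp

end MatrixPSAux

open PowerSeries PexpAux MatrixPSAux in
/-- For an `n×n` matrix `A` over a commutative `ℚ`-algebra `R`, in `R[[x]]`:
`det(I - x A)⁻¹ = exp(Σ_{k≥1} (x^k/k) tr(A^k))`, equivalently
`det(I - x A) = exp(-Σ_{k≥1} (x^k/k) tr(A^k))`. -/
theorem stmt_4 {R : Type*} [CommRing R] [Algebra ℚ R] {n : ℕ}
    (A : Matrix (Fin n) (Fin n) R) :
    (Matrix.det (1 - (PowerSeries.X : PowerSeries R) •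
          A.map (PowerSeries.C (R := R))) *
        pexp (PowerSeries.mk fun k =>
          if k = 0 then 0 else (k : ℚ)⁻¹ • Matrix.trace (A ^ k)) = 1) ∧
    Matrix.det (1 - (PowerSeries.X : PowerSeries R) • A.map (PowerSeries.C (R := R))) =
      pexp (-(PowerSeries.mk fun k =>
        if k = 0 then 0 else (k : ℚ)⁻¹ • Matrix.trace (A ^ k))) := by
  set T : R⟦X⟧ := PowerSeries.mk fun k =>
      if k = 0 then 0 else (k : ℚ)⁻¹ • Matrix.trace (A ^ k) with hT
  set B := 1 - (PowerSeries.X : PowerSeries R) • A.map (PowerSeries.C (R := R)) with hB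
  have hT0 : constantCoeff T = 0 := by rw [hT, constantCoeff_mk, if_pos rfl]
  -- derivative of T
  have hdT : d⁄dX R T = mk fun k => Matrix.trace (A ^ (k + 1)) := by
    ext k
    rw [coeff_derivative, coeff_mk, coeff_mk, if_neg (Nat.succ_ne_zero k)]
    have hc : ((k : R) + 1) = algebraMap ℚ R ((k : ℚ) + 1) := by simp
    rw [hc, smul_mul_assoc, ← Algebra.commutes, ← Algebra.smul_def, smul_smul]
    rw [show ((k + 1 : ℕ) : ℚ)⁻¹ * ((k : ℚ) + 1) = 1 by
      have hcast : ((k + 1 : ℕ) : ℚ) = (k : ℚ) + 1 := by push_cast; ring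
      rw [hcast, inv_mul_cancel₀]
      positivity]
    rw [one_smul]
  -- derivative of det B
  have hdet : d⁄dX R (Matrix.det B) = -(Matrix.det B * d⁄dX R T) := by
    rw [derivation_det (d⁄dX R) B, map_deriv_B, adjugate_B, Matrix.smul_mul,
      Matrix.mul_neg, smul_neg, Matrix.trace_neg, Matrix.trace_smul, smul_eq_mul,
      Matrix.trace_mul_comm, trace_mapC_mul_Minv, hdT, ← hB]
  have h1 : Matrix.det B * pexp T = 1 := by
    apply eq_one_of_deriv_zero
    · rw [map_mul, constantCoeff_detB, constantCoeff_pexp, one_mul]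
    · rw [Derivation.leibniz, smul_eq_mul, smul_eq_mul, derivative_pexp T hT0, hdet]
      ring
  have hneg0 : constantCoeff (-T) = 0 := by rw [map_neg, hT0, neg_zero]
  have h2 : pexp (-T) * pexp T = 1 := by
    apply eq_one_of_deriv_zero
    · rw [map_mul, constantCoeff_pexp, constantCoeff_pexp, one_mul]
    · rw [Derivation.leibniz, smul_eq_mul, smul_eq_mul, derivative_pexp T hT0,
        derivative_pexp (-T) hneg0, map_neg]
      ring
  refine ⟨h1, ?_⟩
  calc Matrix.det B = Matrix.det B * (pexp T * pexp (-T)) := by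
        rw [mul_comm (pexp T), h2, mul_one]
    _ = (Matrix.det B * pexp T) * pexp (-T) := by ring
    _ = pexp (-T) := by rw [h1, one_mul]
end

section
/- Let R be a commutative ℚ-algebra and consider the formal power series ring R[[s_0, s_1, s_2, …]] in countably many variables. Suppose τ and τ' are formal power series satisfying, for every n ≥ 1, the equations ∂τ/∂s_n = (1/(n+1)!)·∂^{n+1}τ/∂s_0^{n+1} and ∂τ'/∂s_n = (1/(n+1)!)·∂^{n+1}τ'/∂s_0^{n+1}. If τ and τ' become equal after setting s_n = 0 for all n ≥ 1, then τ = τ'. -/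
/-- The formal partial derivative `∂/∂s_n` on formal power series in the
countably many variables `s_0, s_1, s_2, …`. -/
noncomputable def sderiv {R : Type*} [CommRing R] (n : ℕ)
    (f : MvPowerSeries ℕ R) : MvPowerSeries ℕ R :=
  fun m => (m n + 1) • MvPowerSeries.coeff (m + Finsupp.single n 1) f

private noncomputable def wgt (m : ℕ →₀ ℕ) : ℕ := (m.erase 0).sum fun _ v => v

private lemma wgt_add (a b : ℕ →₀ ℕ) : wgt (a + b) = wgt a + wgt b := by
  unfold wgt
  rw [Finsupp.erase_add, Finsupp.sum_add_index'] <;> simp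

private lemma wgt_single0 (k : ℕ) : wgt (Finsupp.single 0 k) = 0 := by
  simp [wgt, Finsupp.erase_single]

private lemma wgt_single {n : ℕ} (h : n ≠ 0) (k : ℕ) : wgt (Finsupp.single n k) = k := by
  rw [wgt, Finsupp.erase_single_ne (Ne.symm h), Finsupp.sum_single_index rfl]

private lemma eq_single_of_wgt_eq_zero {m : ℕ →₀ ℕ} (h : wgt m = 0) :
    m = Finsupp.single 0 (m 0) := by
  have h2 : ∀ i ∈ (m.erase 0).support, m.erase 0 i = 0 :=
    Finset.sum_eq_zero_iff.mp h
  ext i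
  rcases eq_or_ne i 0 with rfl | hi
  · simp
  · rw [Finsupp.single_eq_of_ne' (Ne.symm hi)]
    by_contra hmi
    have hi2 : m.erase 0 i ≠ 0 := by rwa [Finsupp.erase_ne hi]
    exact hi2 (h2 i (Finsupp.mem_support_iff.mpr hi2))

private lemma iter_sderiv0 {R : Type*} [CommRing R] (k : ℕ) (f : MvPowerSeries ℕ R)
    (m : ℕ →₀ ℕ) :
    (sderiv 0)^[k] f m =
      (∏ i ∈ Finset.range k, (m 0 + i + 1)) • f (m + Finsupp.single 0 k) := by
  induction k generalizing f with
  | zero => simp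
  | succ k ih =>
    rw [Function.iterate_succ_apply, ih, Finset.prod_range_succ]
    have : sderiv 0 f (m + Finsupp.single 0 k)
        = (m 0 + k + 1) • f (m + Finsupp.single 0 (k + 1)) := by
      simp [sderiv, MvPowerSeries.coeff_apply, add_assoc, Finsupp.single_add]
    rw [this, smul_smul]

/-- Uniqueness for the defining equations of the extended open partition
function: if `τ` and `τ'` both satisfy `∂τ/∂s_n = (1/(n+1)!)·∂^{n+1}τ/∂s_0^{n+1}`
for all `n ≥ 1` and agree after setting `s_n = 0` for `n ≥ 1` (i.e. their
coefficients agree on all monomials in `s_0` alone), then `τ = τ'`. -/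
theorem stmt_9 {R : Type*} [CommRing R] [Algebra ℚ R]
    (τ τ' : MvPowerSeries ℕ R)
    (hτ : ∀ n : ℕ, 1 ≤ n →
      sderiv n τ = ((n + 1).factorial : ℚ)⁻¹ • (sderiv 0)^[n + 1] τ)
    (hτ' : ∀ n : ℕ, 1 ≤ n →
      sderiv n τ' = ((n + 1).factorial : ℚ)⁻¹ • (sderiv 0)^[n + 1] τ')
    (h0 : ∀ k : ℕ, MvPowerSeries.coeff (Finsupp.single 0 k) τ =
      MvPowerSeries.coeff (Finsupp.single 0 k) τ') :
    τ = τ' := by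
  have key : ∀ N : ℕ, ∀ m : ℕ →₀ ℕ, wgt m ≤ N →
      MvPowerSeries.coeff m τ = MvPowerSeries.coeff m τ' := by
    intro N
    induction N with
    | zero =>
      intro m hm
      rw [eq_single_of_wgt_eq_zero (Nat.le_zero.mp hm)]
      exact h0 _
    | succ N ih =>
      intro m hm
      by_cases hz : wgt m = 0
      · rw [eq_single_of_wgt_eq_zero hz]; exact h0 _
      · -- find n ≠ 0 with m n ≠ 0
        have : (m.erase 0).support.Nonempty := by
          rw [Finset.nonempty_iff_ne_empty]
          intro hsupp
          exact hz (by rw [wgt, Finsupp.sum, hsupp, Finset.sum_empty])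
        obtain ⟨n, hn⟩ := this
        have hn0 : n ≠ 0 := by
          intro h; subst h
          exact Finsupp.mem_support_iff.mp hn (Finsupp.erase_same)
        have hmn : m n ≠ 0 := by
          have := Finsupp.mem_support_iff.mp hn
          rwa [Finsupp.erase_ne hn0] at this
        set m' := m - Finsupp.single n 1 with hm'
        have hadd : m' + Finsupp.single n 1 = m :=
          tsub_add_cancel_of_le (Finsupp.single_le_iff.mpr (Nat.one_le_iff_ne_zero.mpr hmn))
        have hwm : wgt m = wgt m' + 1 := by
          rw [← hadd, wgt_add, wgt_single hn0]
        have hwm' : wgt m' ≤ N := by omega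
        set p := m' + Finsupp.single 0 (n + 1) with hp
        have hwp : wgt p ≤ N := by
          rw [hp, wgt_add, wgt_single0]; simpa using hwm'
        have hcp := ih p hwp
        have h1 : 1 ≤ n := Nat.one_le_iff_ne_zero.mpr hn0
        have e1 := congrFun (hτ n h1) m'
        have e2 := congrFun (hτ' n h1) m'
        have expand : ∀ f : MvPowerSeries ℕ R,
            (((n + 1).factorial : ℚ)⁻¹ • (sderiv 0)^[n + 1] f) m' =
            ((n + 1).factorial : ℚ)⁻¹ •
              ((∏ i ∈ Finset.range (n + 1), (m' 0 + i + 1)) • f p) := by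
          intro f
          show ((n + 1).factorial : ℚ)⁻¹ • ((sderiv 0)^[n + 1] f m') = _
          rw [iter_sderiv0]
        rw [expand, show sderiv n τ m' = (m' n + 1) • MvPowerSeries.coeff m τ by
            rw [sderiv, hadd]] at e1
        rw [expand, show sderiv n τ' m' = (m' n + 1) • MvPowerSeries.coeff m τ' by
            rw [sderiv, hadd]] at e2
        have heq : (m' n + 1) • MvPowerSeries.coeff m τ
            = (m' n + 1) • MvPowerSeries.coeff m τ' := by
          rw [e1, e2, show τ p = τ' p from hcp]
        have hk : ((m' n + 1 : ℕ) : ℚ) ≠ 0 := by positivity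
        have hx : ((m' n + 1 : ℕ) : ℚ) • MvPowerSeries.coeff m τ
            = ((m' n + 1 : ℕ) : ℚ) • MvPowerSeries.coeff m τ' := by
          rw [Nat.cast_smul_eq_nsmul, Nat.cast_smul_eq_nsmul]; exact heq
        calc MvPowerSeries.coeff m τ
            = ((m' n + 1 : ℕ) : ℚ)⁻¹ • (((m' n + 1 : ℕ) : ℚ) • MvPowerSeries.coeff m τ) := by
              rw [smul_smul, inv_mul_cancel₀ hk, one_smul]
          _ = ((m' n + 1 : ℕ) : ℚ)⁻¹ • (((m' n + 1 : ℕ) : ℚ) • MvPowerSeries.coeff m τ') := by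
              rw [hx]
          _ = MvPowerSeries.coeff m τ' := by rw [smul_smul, inv_mul_cancel₀ hk, one_smul]
  ext m
  exact key (wgt m) m le_rfl
end
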